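/- Zero-collateral condition: let K be the set of players with investment opportunities in enterprise k, fix A_k ⊂ K and a player i ∈ K∖A_k. (1) If x_{ki} + Σ_{j∈A_k} x_{kj} ≥ Z_k(1 + 1/α_k), then for every action profile of all players in which i does not default and all players of A_k invest in k, player i has a strict best reply to cooperate with respect to k even with zero collateral c_{ki}=0. (2) Conversely, if with c_{ki}=0 player i's utility from enterprise k is at least x_{ki} under the profile where exactly the players A_k ∪ {i} invest in k and all other players in K defect, then x_{ki} + Σ_{j∈A_k} x_{kj} ≥ Z_k(1 + 1/α_k). -/

import Mathlib

open scoped BigOperators Classical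

/-- A network investment game on `n` firms.  `x k i` is the amount that firm `i`
can invest in the enterprise of firm `k` (`x k i = 0` means that there is no
edge `(k,i)`), `Z k` is the operational cost of the enterprise of `k` and
`α k` is its interest rate.  As in the paper, `Z k = 0` (w.l.o.g.) for
non-enterprise vertices and `α k > 0` for enterprise vertices. -/
structure InvestmentNetwork (n : ℕ) where
  x : Fin n → Fin n → ℝ
  Z : Fin n → ℝ
  α : Fin n → ℝ
  x_nonneg : ∀ k i, 0 ≤ x k i
  Z_nonneg : ∀ k, 0 ≤ Z k
  α_pos : ∀ k, (∃ i, 0 < x k i) → 0 < α k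
  Z_spike : ∀ k, (∀ i, x k i = 0) → Z k = 0

namespace InvestmentNetwork

variable {n : ℕ}

/-- `k` is an enterprise vertex: it has at least one potential investor. -/
def IsEnterprise (N : InvestmentNetwork n) (k : Fin n) : Prop :=
  ∃ i, 0 < N.x k i

/-- The set of edges `(k,i)` of the investment graph: `i` has an investment
opportunity in the enterprise of `k`. -/
noncomputable def edges (N : InvestmentNetwork n) : Finset (Fin n × Fin n) :=
  Finset.univ.filter (fun e => 0 < N.x e.1 e.2)

/-- A strategy profile is identified with its set of cooperate edges. -/
def IsProfile (N : InvestmentNetwork n) (C : Finset (Fin n × Fin n)) : Prop :=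
  C ⊆ N.edges

/-- The total capital raised by enterprise `k` when `I` is a set of invest edges. -/
noncomputable def raised (N : InvestmentNetwork n) (I : Finset (Fin n × Fin n)) (k : Fin n) : ℝ :=
  ∑ i : Fin n, if (k, i) ∈ I then N.x k i else 0

/-- `I` is a consistent set of invest edges within the cooperate edges `C`: the
investor of every edge of `I` is not in default when the invest edges are `I`. -/
def Consistent (N : InvestmentNetwork n) (C I : Finset (Fin n × Fin n)) : Prop :=
  I ⊆ C ∧ ∀ e ∈ I, N.Z e.2 ≤ N.raised I e.2

/-- The set of invest edges determined from the cooperate edges `C` by the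
default-determination process (the greatest consistent subset of `C`,
i.e. the result of iteratively deleting the investments of defaulting firms). -/
noncomputable def investSet (N : InvestmentNetwork n) (C : Finset (Fin n × Fin n)) :
    Finset (Fin n × Fin n) :=
  C.filter (fun e => ∃ I, N.Consistent C I ∧ e ∈ I)

/-- Firm `k` is in default under the cooperate edges `C`. -/
def Defaults (N : InvestmentNetwork n) (C : Finset (Fin n × Fin n)) (k : Fin n) : Prop :=
  N.raised (N.investSet C) k < N.Z k

/-- The enterprise return `R_{ki}` to investor `i` in enterprise `k` when the
set of invest edges is `I`. -/
noncomputable def ret (N : InvestmentNetwork n) (I : Finset (Fin n × Fin n)) (k i : Fin n) : ℝ :=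
  max 0 ((1 + N.α k) * (N.raised I k - N.Z k) * (N.x k i / N.raised I k))

/-- The utility of firm `i` from the edge `(k,i)` under cooperate edges `C` and
collateral matrix `c`: `x k i` if `i` defects, `0` if `i` cooperates but is in
default, and otherwise the return adjusted by the collateral. -/
noncomputable def edgeUtility (N : InvestmentNetwork n) (c : Fin n → Fin n → ℝ)
    (C : Finset (Fin n × Fin n)) (k i : Fin n) : ℝ :=
  if (k, i) ∉ C then N.x k i
  else if (k, i) ∉ N.investSet C then 0
  else if N.ret (N.investSet C) k i ≤ N.x k i - c k i then c k i + N.ret (N.investSet C) k i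
  else if N.ret (N.investSet C) k i ≤ N.x k i then N.x k i
  else N.ret (N.investSet C) k i

/-- Total utility of firm `i`: the sum of her utilities over all her
investment opportunities. -/
noncomputable def utility (N : InvestmentNetwork n) (c : Fin n → Fin n → ℝ)
    (C : Finset (Fin n × Fin n)) (i : Fin n) : ℝ :=
  ∑ k : Fin n, if (k, i) ∈ N.edges then N.edgeUtility c C k i else 0

/-- The number of investment opportunities in which `i` cooperates. -/
noncomputable def coopCount (C : Finset (Fin n × Fin n)) (i : Fin n) : ℕ :=
  (C.filter (fun e => e.2 = i)).card

/-- `c` is a collateral matrix: nonnegative and supported on the edges. -/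
def IsCollateral (N : InvestmentNetwork n) (c : Fin n → Fin n → ℝ) : Prop :=
  ∀ k i, 0 ≤ c k i ∧ (N.x k i = 0 → c k i = 0)

/-- `C'` is obtained from `C` by changing only decisions of player `i`. -/
def Deviation (C C' : Finset (Fin n × Fin n)) (i : Fin n) : Prop :=
  ∀ e : Fin n × Fin n, e.2 ≠ i → (e ∈ C ↔ e ∈ C')

/-- Nash equilibrium of the game induced by the collateral matrix `c`, with
ties broken towards investing: this is formalized by comparing utilities
lexicographically, an infinitesimal bonus being given for each cooperation. -/
def NashEq (N : InvestmentNetwork n) (c : Fin n → Fin n → ℝ)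
    (C : Finset (Fin n × Fin n)) : Prop :=
  N.IsProfile C ∧
    ∀ (i : Fin n) (C' : Finset (Fin n × Fin n)), N.IsProfile C' → Deviation C C' i →
      N.utility c C' i < N.utility c C i ∨
        (N.utility c C' i = N.utility c C i ∧ coopCount C' i ≤ coopCount C i)

/-- A viable collateral matrix: all-cooperate is the unique Nash equilibrium of
the induced game. -/
def Viable (N : InvestmentNetwork n) (c : Fin n → Fin n → ℝ) : Prop :=
  N.IsCollateral c ∧ N.NashEq c N.edges ∧ ∀ C, N.NashEq c C → C = N.edges

/-- The total collateral of a collateral matrix. -/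
noncomputable def total (c : Fin n → Fin n → ℝ) : ℝ :=
  ∑ k : Fin n, ∑ i : Fin n, c k i

/-- An optimal solution of the collateral minimization problem: a viable
collateral matrix of minimum total collateral. -/
def Optimal (N : InvestmentNetwork n) (c : Fin n → Fin n → ℝ) : Prop :=
  N.Viable c ∧ ∀ c', N.Viable c' → total c ≤ total c'

/-- All enterprises are (potentially) profitable:
`(1 + α k) * (X k - Z k) ≥ X k` where `X k = ∑ i, x k i`. -/
def Profitable (N : InvestmentNetwork n) : Prop :=
  ∀ k, N.IsEnterprise k → (∑ i, N.x k i) ≤ (1 + N.α k) * ((∑ i, N.x k i) - N.Z k)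

/-- Player `i` strictly prefers (ties being broken towards investing) to
cooperate rather than to defect w.r.t. enterprise `k`, when the cooperate
edges of the other decisions are those of `C`. -/
def StrictlyPrefersCoop (N : InvestmentNetwork n) (c : Fin n → Fin n → ℝ)
    (C : Finset (Fin n × Fin n)) (k i : Fin n) : Prop :=
  N.x k i ≤ N.edgeUtility c (insert (k, i) C) k i

/-- `σ` is an order of the edges along which iterated elimination of strictly
dominated strategies leads to the all-cooperate profile: at every step, given
that the previously processed edges cooperate, the player of the next edge
strictly prefers to cooperate whatever the remaining players do. -/
def ElimOrder (N : InvestmentNetwork n) (c : Fin n → Fin n → ℝ)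
    (σ : List (Fin n × Fin n)) : Prop :=
  σ.Nodup ∧ (∀ e, e ∈ σ ↔ e ∈ N.edges) ∧
    ∀ (t : ℕ) (ht : t < σ.length) (C : Finset (Fin n × Fin n)),
      N.IsProfile C → (∀ e ∈ σ.take t, e ∈ C) →
      N.StrictlyPrefersCoop c C (σ.get ⟨t, ht⟩).1 (σ.get ⟨t, ht⟩).2

end InvestmentNetwork

namespace InvestmentNetwork

/-- The enterprise return to investor `i` in enterprise `k` when the set of
players investing in `k` is exactly `S`. -/
noncomputable def retOf (N : InvestmentNetwork n) (S : Finset (Fin n)) (k i : Fin n) : ℝ :=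
  max 0 ((1 + N.α k) * ((∑ j ∈ S, N.x k j) - N.Z k) * (N.x k i / ∑ j ∈ S, N.x k j))

end InvestmentNetwork

namespace InvestmentNetwork

lemma raised_mono {n : ℕ} (N : InvestmentNetwork n) {I I' : Finset (Fin n × Fin n)}
    (h : I ⊆ I') (k : Fin n) : N.raised I k ≤ N.raised I' k := by
  unfold raised
  apply Finset.sum_le_sum
  intro j _
  by_cases hj : (k, j) ∈ I
  · simp [hj, h hj]
  · rw [if_neg hj]
    split_ifs <;> simp [N.x_nonneg]

lemma investSet_consistent {n : ℕ} (N : InvestmentNetwork n)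
    (C : Finset (Fin n × Fin n)) : N.Consistent C (N.investSet C) := by
  constructor
  · exact Finset.filter_subset _ _
  · intro e he
    rw [investSet, Finset.mem_filter] at he
    obtain ⟨heC, I, hI, heI⟩ := he
    have hsub : I ⊆ N.investSet C := by
      intro f hf
      rw [investSet, Finset.mem_filter]
      exact ⟨hI.1 hf, I, hI, hf⟩
    exact le_trans (hI.2 e heI) (N.raised_mono hsub e.2)

lemma mem_investSet {n : ℕ} (N : InvestmentNetwork n)
    {C : Finset (Fin n × Fin n)} {k i : Fin n} (hC : (k, i) ∈ C)
    (hZ : N.Z i ≤ N.raised (N.investSet C) i) : (k, i) ∈ N.investSet C := by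
  set J := insert (k, i) (N.investSet C) with hJ
  have hsub : N.investSet C ⊆ J := Finset.subset_insert _ _
  have hcons : N.Consistent C J := by
    constructor
    · intro f hf
      rcases Finset.mem_insert.mp hf with h | h
      · subst h; exact hC
      · exact (N.investSet_consistent C).1 h
    · intro e he
      rcases Finset.mem_insert.mp he with h | h
      · subst h
        exact le_trans hZ (N.raised_mono hsub i)
      · exact le_trans ((N.investSet_consistent C).2 e h) (N.raised_mono hsub e.2)
  rw [investSet, Finset.mem_filter]
  exact ⟨hC, J, hcons, Finset.mem_insert_self _ _⟩

lemma sum_le_raised {n : ℕ} (N : InvestmentNetwork n)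
    {I : Finset (Fin n × Fin n)} {k : Fin n} {S : Finset (Fin n)}
    (hS : ∀ j ∈ S, (k, j) ∈ I) : (∑ j ∈ S, N.x k j) ≤ N.raised I k := by
  unfold raised
  calc (∑ j ∈ S, N.x k j) = ∑ j ∈ S, (if (k, j) ∈ I then N.x k j else 0) := by
        apply Finset.sum_congr rfl; intro j hj; rw [if_pos (hS j hj)]
    _ ≤ ∑ j : Fin n, (if (k, j) ∈ I then N.x k j else 0) := by
        apply Finset.sum_le_sum_of_subset_of_nonneg (Finset.subset_univ S)
        intro j _ _
        split <;> simp [N.x_nonneg]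

end InvestmentNetwork

/-- **Zero-collateral condition (Lemma 1).**  Let `A` be a set of investors of
enterprise `k` and `i ∉ A` another investor of `k`, and suppose `i`'s
collateral is `c k i = 0`.
(1) If `x k i + ∑_{j ∈ A} x k j ≥ Z k (1 + 1/α k)`, then in every action
profile in which `i` cooperates w.r.t. `k` and does not default and all
players of `A` invest in `k`, cooperation w.r.t. `k` is a strict best reply of
`i` (ties broken towards investing) even with zero collateral, i.e. her
utility from the edge `(k,i)` is at least the defect utility `x k i`.
(2) Conversely, if the utility of `i` (with zero collateral) from `k` is at
least `x k i` when exactly the players `A ∪ {i}` invest in `k`, then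
`x k i + ∑_{j ∈ A} x k j ≥ Z k (1 + 1/α k)`. -/
theorem zero_collateral_condition {n : ℕ} (N : InvestmentNetwork n)
    (k i : Fin n) (A : Finset (Fin n))
    (hAK : ∀ j ∈ A, 0 < N.x k j) (hiK : 0 < N.x k i) (hiA : i ∉ A)
    (c : Fin n → Fin n → ℝ) (hc : N.IsCollateral c) (hci : c k i = 0) :
    ((N.Z k * (1 + 1 / N.α k) ≤ N.x k i + ∑ j ∈ A, N.x k j →
       ∀ C : Finset (Fin n × Fin n), N.IsProfile C → (k, i) ∈ C →
         ¬ N.Defaults C i → (∀ j ∈ A, (k, j) ∈ N.investSet C) →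
         N.x k i ≤ N.edgeUtility c C k i)
     ∧
     (N.x k i ≤ N.retOf (insert i A) k i →
       N.Z k * (1 + 1 / N.α k) ≤ N.x k i + ∑ j ∈ A, N.x k j)) := by
  have hα : 0 < N.α k := N.α_pos k ⟨i, hiK⟩
  have hsumA : 0 ≤ ∑ j ∈ A, N.x k j := Finset.sum_nonneg fun j _ => N.x_nonneg k j
  have hspos : 0 < N.x k i + ∑ j ∈ A, N.x k j := by linarith
  constructor
  · intro hZle C hprof hmemC hnd hA
    rw [InvestmentNetwork.Defaults, not_lt] at hnd
    have hki : (k, i) ∈ N.investSet C := N.mem_investSet hmemC hnd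
    set X := N.raised (N.investSet C) k with hX
    have hins : ∀ j ∈ insert i A, (k, j) ∈ N.investSet C := by
      intro j hj
      rcases Finset.mem_insert.mp hj with h | h
      · subst h; exact hki
      · exact hA j h
    have hXge : N.x k i + ∑ j ∈ A, N.x k j ≤ X := by
      have := N.sum_le_raised hins
      rwa [Finset.sum_insert hiA] at this
    have hXpos : 0 < X := lt_of_lt_of_le hspos hXge
    have key : N.Z k * (N.α k + 1) ≤ X * N.α k := by
      have h := mul_le_mul_of_nonneg_right (le_trans hZle hXge) hα.le
      calc N.Z k * (N.α k + 1) = N.Z k * (1 + 1 / N.α k) * N.α k := by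
            field_simp
        _ ≤ X * N.α k := h
    have hret : N.x k i ≤ N.ret (N.investSet C) k i := by
      rw [InvestmentNetwork.ret, ← hX]
      apply le_max_of_le_right
      rw [div_eq_mul_inv, ← mul_assoc, ← div_eq_mul_inv, le_div_iff₀ hXpos]
      nlinarith [mul_le_mul_of_nonneg_left key hiK.le]
    rw [InvestmentNetwork.edgeUtility, if_neg (not_not.mpr hmemC),
      if_neg (not_not.mpr hki), hci, sub_zero, zero_add]
    split_ifs <;> linarith [hret]
  · intro h
    rw [InvestmentNetwork.retOf, Finset.sum_insert hiA] at h
    set X := N.x k i + ∑ j ∈ A, N.x k j with hXdef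
    have hmax : N.x k i ≤ (1 + N.α k) * (X - N.Z k) * (N.x k i / X) := by
      rcases le_max_iff.mp h with h0 | h0
      · linarith
      · exact h0
    rw [div_eq_mul_inv, ← mul_assoc, ← div_eq_mul_inv, le_div_iff₀ hspos] at hmax
    have hX : X ≤ (1 + N.α k) * (X - N.Z k) := by
      have h2 : X * N.x k i ≤ (1 + N.α k) * (X - N.Z k) * N.x k i := by nlinarith [hmax]
      exact (mul_le_mul_iff_of_pos_right hiK).mp h2
    rw [← mul_le_mul_iff_of_pos_right hα]
    calc N.Z k * (1 + 1 / N.α k) * N.α k = N.Z k * (N.α k + 1) := by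
          field_simp
      _ ≤ X * N.α k := by nlinarith [hX]
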